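/- Let K be a finite cubical complex of dimension d in which the link of every face has even Euler characteristic. Then the Z/2-chain P_i = (S(K) + S(K)_{[d,d−i]}) ∩ C_i(K) (the sum of all i-flags of K not entirely contained in ranks {d−i,...,d}) is a cycle: ∂P_i = 0 over Z/2, for 0 < i < d. -/

import Mathlib

/-- The three-element face poset `I = {0, 1, *}` of an interval. -/
def IntervalFace : Type := Option Bool

instance : PartialOrder IntervalFace where
  le a b := b = none ∨ a = b
  le_refl a := Or.inr rfl
  le_trans a b c hab hbc := by
    rcases hbc with h | h
    · exact Or.inl h
    · exact h ▸ hab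
  le_antisymm a b hab hba := by
    rcases hab with h | h
    · rcases hba with h' | h'
      · rw [h, h']
      · exact h'.symm
    · exact h

/-- An `r`-flag in a poset: a strictly increasing chain of `r+1` elements. -/
def PosetFlag (α : Type*) [Preorder α] (r : ℕ) : Type _ :=
  {c : Fin (r + 1) → α // StrictMono c}

namespace IntervalFace

instance : DecidableEq IntervalFace := inferInstanceAs (DecidableEq (Option Bool))
instance : Fintype IntervalFace := inferInstanceAs (Fintype (Option Bool))
instance : OrderTop IntervalFace where
  top := (none : Option Bool)
  le_top _ := Or.inl rfl

lemma le_def {a b : IntervalFace} : a ≤ b ↔ b = ⊤ ∨ a = b := Iff.rfl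

/-- vertex coordinate -/
def mk (b : Bool) : IntervalFace := (Option.some b : Option Bool)

lemma cases' (a : IntervalFace) : a = ⊤ ∨ ∃ b, a = mk b := by
  have h : ∀ o : Option Bool, (show IntervalFace from o) = ⊤ ∨ ∃ b, (show IntervalFace from o) = mk b := by
    intro o
    cases o with
    | none => exact Or.inl rfl
    | some b => exact Or.inr ⟨b, rfl⟩
  exact h a

lemma mk_ne_top (b : Bool) : mk b ≠ ⊤ := fun h => Option.some_ne_none b h

lemma mk_inj {b b' : Bool} (h : mk b = mk b') : b = b' := Option.some_injective _ h

/-- flip the bit of a vertex-coordinate -/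
def bflip (a : IntervalFace) : IntervalFace :=
  ((show Option Bool from a).map not : Option Bool)

lemma bflip_top : bflip ⊤ = ⊤ := rfl

lemma bflip_mk (b : Bool) : bflip (mk b) = mk (!b) := rfl

lemma bflip_eq_top_iff {a : IntervalFace} : bflip a = ⊤ ↔ a = ⊤ := by
  rcases cases' a with h | ⟨b, h⟩ <;> subst h
  · simp [bflip_top]
  · simp [bflip_mk, mk_ne_top]

lemma bflip_bflip (a : IntervalFace) : bflip (bflip a) = a := by
  rcases cases' a with h | ⟨b, h⟩ <;> subst h
  · rfl
  · rw [bflip_mk, bflip_mk, Bool.not_not]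

lemma bflip_ne {a : IntervalFace} (h : a ≠ ⊤) : bflip a ≠ a := by
  rcases cases' a with h' | ⟨b, h'⟩
  · exact absurd h' h
  · subst h'
    rw [bflip_mk]
    intro hc
    exact Bool.not_ne_self b (mk_inj hc)

end IntervalFace

/-- Fixed-point-free involution forces even cardinality. -/
lemma even_card_of_invol {α : Type*} [Finite α] (f : α → α)
    (h2 : ∀ a, f (f a) = a) (hne : ∀ a, f a ≠ a) : Even (Nat.card α) := by
  classical
  letI := Fintype.ofFinite α
  rw [Nat.card_eq_fintype_card]
  set g : Function.End α := f with hg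
  have hf : g ^ 2 ^ 1 = 1 := by
    rw [show (2 ^ 1 : ℕ) = 2 from rfl, pow_two]
    funext a
    show f (f a) = a
    exact h2 a
  have hmod := Equiv.Perm.card_fixedPoints_modEq (p := 2) (n := 1) hf
  haveI : IsEmpty (Function.fixedPoints g) := ⟨fun ⟨a, ha⟩ => hne a ha⟩
  have h0 : Fintype.card (Function.fixedPoints g) = 0 := Fintype.card_eq_zero
  rw [h0] at hmod
  rw [Nat.even_iff]
  simpa [Nat.ModEq] using hmod

/-! ### Cube lemmas -/

abbrev Cube (n : ℕ) := Fin n → IntervalFace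

namespace Cube

variable {n : ℕ}

lemma top_apply (c : Fin n) : (⊤ : Cube n) c = ⊤ := rfl

lemma le_iff {Y Z : Cube n} : Y ≤ Z ↔ ∀ c, Z c = ⊤ ∨ Y c = Z c := Iff.rfl

lemma eq_top_iff' {Y : Cube n} : Y = ⊤ ↔ ∀ c, Y c = ⊤ := by
  constructor
  · intro h c; rw [h]; rfl
  · intro h; funext c; exact h c

lemma ne_top_iff {Y : Cube n} : Y ≠ ⊤ ↔ ∃ c, Y c ≠ ⊤ := by
  rw [Ne, eq_top_iff']
  push_neg
  rfl

/-- number of free (`*`) coordinates of a face of the cube -/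
def nnone (Y : Cube n) : ℕ := (Finset.univ.filter fun c => Y c = ⊤).card

lemma nnone_lt {Y : Cube n} (h : Y ≠ ⊤) : nnone Y < n := by
  obtain ⟨c, hc⟩ := ne_top_iff.mp h
  have hss : (Finset.univ.filter fun c => Y c = ⊤) ⊂ Finset.univ := by
    refine Finset.ssubset_iff_of_subset (Finset.filter_subset _ _) |>.mpr ?_
    exact ⟨c, Finset.mem_univ c, by simp [hc]⟩
  simpa [nnone] using Finset.card_lt_card hss

lemma card_IntervalFace : Fintype.card IntervalFace = 3 := rfl

/-- the part of the cube below a face is a (smaller) cube -/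
noncomputable def iicEquiv (Y : Cube n) : Set.Iic Y ≃ ({c // Y c = ⊤} → IntervalFace) where
  toFun Z := fun c => Z.1 c.1
  invFun f := ⟨fun c => if h : Y c = ⊤ then f ⟨c, h⟩ else Y c, by
    intro c
    by_cases h : Y c = ⊤
    · exact Or.inl h
    · exact Or.inr (by simp only [dif_neg h])⟩
  left_inv Z := by
    apply Subtype.ext
    funext c
    by_cases h : Y c = ⊤
    · simp [dif_pos h]
    · simp only [dif_neg h]
      rcases Z.2 c with h' | h'
      · exact absurd h' h
      · exact h'.symm
  right_inv f := by
    funext c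
    simp [dif_pos c.2]

lemma card_Iic (Y : Cube n) : Nat.card (Set.Iic Y) = 3 ^ nnone Y := by
  classical
  rw [Nat.card_congr (iicEquiv Y), Nat.card_eq_fintype_card, Fintype.card_fun,
    card_IntervalFace, Fintype.card_subtype]
  rfl

lemma card_cube (n : ℕ) : Nat.card (Cube n) = 3 ^ n := by
  classical
  rw [Nat.card_eq_fintype_card, Fintype.card_fun, card_IntervalFace, Fintype.card_fin]

lemma min'_congr {α : Type*} [LinearOrder α] {s t : Finset α} (h : s = t)
    (hs : s.Nonempty) (ht : t.Nonempty) : s.min' hs = t.min' ht := by subst h; rfl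

/-- the coordinates where a face is not free -/
def Fset (Y : Cube n) : Finset (Fin n) := Finset.univ.filter fun c => Y c ≠ ⊤

lemma Fset_nonempty {Y : Cube n} (h : Y ≠ ⊤) : (Fset Y).Nonempty := by
  obtain ⟨c, hc⟩ := ne_top_iff.mp h
  exact ⟨c, by simp [Fset, hc]⟩

/-- least non-free coordinate -/
def c0 (Y : Cube n) (h : Y ≠ ⊤) : Fin n := (Fset Y).min' (Fset_nonempty h)

lemma c0_not_top {Y : Cube n} (h : Y ≠ ⊤) : Y (c0 Y h) ≠ ⊤ := by
  have := (Fset Y).min'_mem (Fset_nonempty h)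
  simpa [Fset, c0] using this

/-- flip the bit at the least non-free coordinate -/
def cflip (Y : Cube n) (h : Y ≠ ⊤) : Cube n :=
  Function.update Y (c0 Y h) (IntervalFace.bflip (Y (c0 Y h)))

lemma cflip_apply {Y : Cube n} (h : Y ≠ ⊤) (c : Fin n) :
    cflip Y h c = if c = c0 Y h then IntervalFace.bflip (Y c) else Y c := by
  unfold cflip
  by_cases hc : c = c0 Y h
  · subst hc; simp [Function.update_self]
  · simp [Function.update_of_ne hc, hc]

lemma cflip_top_iff {Y : Cube n} (h : Y ≠ ⊤) (c : Fin n) :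
    cflip Y h c = ⊤ ↔ Y c = ⊤ := by
  rw [cflip_apply]
  by_cases hc : c = c0 Y h
  · simp [hc, IntervalFace.bflip_eq_top_iff]
  · simp [hc]

lemma cflip_ne_top {Y : Cube n} (h : Y ≠ ⊤) : cflip Y h ≠ ⊤ := by
  intro hc
  have h1 : cflip Y h (c0 Y h) = ⊤ := by rw [hc]; rfl
  exact c0_not_top h ((cflip_top_iff h _).mp h1)

lemma Fset_cflip {Y : Cube n} (h : Y ≠ ⊤) : Fset (cflip Y h) = Fset Y := by
  unfold Fset
  apply Finset.filter_congr
  intro c _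
  simp only [ne_eq, eq_iff_iff]
  rw [cflip_top_iff]

lemma c0_cflip {Y : Cube n} (h : Y ≠ ⊤) :
    c0 (cflip Y h) (cflip_ne_top h) = c0 Y h :=
  min'_congr (Fset_cflip h) _ _

lemma nnone_cflip {Y : Cube n} (h : Y ≠ ⊤) : nnone (cflip Y h) = nnone Y := by
  unfold nnone
  congr 1
  apply Finset.filter_congr
  intro c _
  exact cflip_top_iff h c

lemma cflip_cflip {Y : Cube n} (h : Y ≠ ⊤) :
    cflip (cflip Y h) (cflip_ne_top h) = Y := by
  funext c
  rw [cflip_apply, c0_cflip h]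
  by_cases hc : c = c0 Y h
  · simp only [if_pos hc]
    rw [cflip_apply, if_pos hc]
    subst hc
    exact IntervalFace.bflip_bflip _
  · simp only [if_neg hc]
    rw [cflip_apply, if_neg hc]

lemma cflip_ne_self {Y : Cube n} (h : Y ≠ ⊤) : cflip Y h ≠ Y := by
  intro hc
  have := congrFun hc (c0 Y h)
  rw [cflip_apply, if_pos rfl] at this
  exact IntervalFace.bflip_ne (c0_not_top h) this

/-- parity of the set of non-top faces with constrained number of free coordinates -/
lemma even_card_sub_top (p : ℕ → Prop) :
    Even (Nat.card {Y : Cube n // Y ≠ ⊤ ∧ p (nnone Y)}) := by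
  refine even_card_of_invol
    (f := fun q : {Y : Cube n // Y ≠ ⊤ ∧ p (nnone Y)} =>
      ⟨cflip q.1 q.2.1, cflip_ne_top q.2.1, by rw [nnone_cflip]; exact q.2.2⟩) ?_ ?_
  · rintro ⟨Y, hY, hp⟩
    exact Subtype.ext (cflip_cflip hY)
  · rintro ⟨Y, hY, hp⟩
    intro hc
    exact cflip_ne_self hY (congrArg Subtype.val hc)

/-- the "complement within an interval" involution -/
def icompl (Y0 Y : Cube n) : Cube n := fun c => if Y c = ⊤ then Y0 c else ⊤

lemma icompl_apply (Y0 Y : Cube n) (c : Fin n) :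
    icompl Y0 Y c = if Y c = ⊤ then Y0 c else ⊤ := rfl

lemma even_card_interval (Y0 : Cube n) :
    Even (Nat.card {Y : Cube n // Y0 < Y ∧ Y ≠ ⊤}) := by
  have h1 : ∀ Y : Cube n, Y0 ≤ icompl Y0 Y := by
    intro Y c
    by_cases hc : Y c = ⊤
    · exact Or.inr (by rw [icompl_apply, if_pos hc])
    · exact Or.inl (by rw [icompl_apply, if_neg hc]; rfl)
  have h2 : ∀ Y : Cube n, Y0 ≤ Y → Y ≠ ⊤ → icompl Y0 Y ≠ Y0 := by
    intro Y hle hY hc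
    obtain ⟨c, hcne⟩ := ne_top_iff.mp hY
    rcases hle c with h' | h'
    · exact hcne h'
    · have hT : icompl Y0 Y c = ⊤ := by rw [icompl_apply, if_neg hcne]
      rw [hc] at hT
      rw [← h'] at hcne
      exact hcne hT
  have h3 : ∀ Y : Cube n, Y0 ≤ Y → Y0 ≠ Y → icompl Y0 Y ≠ ⊤ := by
    intro Y hle hne hc
    have : ∃ c, Y0 c ≠ Y c := by
      by_contra hcon
      push_neg at hcon
      exact hne (funext hcon)
    obtain ⟨c, hcne⟩ := this
    rcases hle c with h' | h'
    · have h'' : Y c = ⊤ := h'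
      have hT : icompl Y0 Y c = Y0 c := by rw [icompl_apply, if_pos h'']
      rw [hc, top_apply] at hT
      rw [h'] at hcne
      exact hcne hT.symm
    · exact hcne h'
  have h4 : ∀ Y : Cube n, Y0 ≤ Y → icompl Y0 (icompl Y0 Y) = Y := by
    intro Y hle
    funext c
    by_cases hc : Y c = ⊤
    · have hin : icompl Y0 Y c = Y0 c := by rw [icompl_apply, if_pos hc]
      by_cases h0 : Y0 c = ⊤
      · rw [icompl_apply, hin, if_pos h0, h0, hc]
      · rw [icompl_apply, hin, if_neg h0, hc]
    · rcases hle c with h' | h'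
      · exact absurd h' hc
      · have hin : icompl Y0 Y c = ⊤ := by rw [icompl_apply, if_neg hc]
        rw [icompl_apply, hin, if_pos rfl, h']
  have h5 : ∀ Y : Cube n, Y ≠ ⊤ → icompl Y0 Y ≠ Y := by
    intro Y hY hc
    obtain ⟨c, hcne⟩ := ne_top_iff.mp hY
    have hT : icompl Y0 Y c = ⊤ := by rw [icompl_apply, if_neg hcne]
    rw [hc] at hT
    exact hcne hT
  refine even_card_of_invol
    (f := fun q : {Y : Cube n // Y0 < Y ∧ Y ≠ ⊤} =>
      ⟨icompl Y0 q.1, lt_of_le_of_ne (h1 q.1) (Ne.symm (h2 q.1 q.2.1.le q.2.2)),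
        h3 q.1 q.2.1.le q.2.1.ne⟩) ?_ ?_
  · rintro ⟨Y, hlt, hY⟩
    exact Subtype.ext (h4 Y hlt.le)
  · rintro ⟨Y, hlt, hY⟩
    intro hc
    exact h5 Y hY (congrArg Subtype.val hc)

end Cube

/-! ### Poset-level lemmas -/

section KLemmas

variable {K : Type*} [PartialOrder K] [Fintype K] {rank : K → ℕ}

lemma card_Iic_K (hcubical : ∀ x : K, Nonempty (Set.Iic x ≃o (Fin (rank x) → IntervalFace)))
    (x : K) : Nat.card (Set.Iic x) = 3 ^ rank x := by
  obtain ⟨e⟩ := hcubical x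
  rw [Nat.card_congr e.toEquiv, Cube.card_cube]

lemma rank_eq_nnone (hcubical : ∀ x : K, Nonempty (Set.Iic x ≃o (Fin (rank x) → IntervalFace)))
    {x z : K} (hz : z ≤ x) (e : Set.Iic x ≃o (Fin (rank x) → IntervalFace)) :
    rank z = Cube.nnone (e ⟨z, hz⟩) := by
  have h1 : Nat.card (Set.Iic z) = 3 ^ rank z := card_Iic_K hcubical z
  have e1 : Set.Iic z ≃ Set.Iic (⟨z, hz⟩ : Set.Iic x) :=
    { toFun := fun w => ⟨⟨w.1, w.2.trans hz⟩, w.2⟩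
      invFun := fun w => ⟨w.1.1, w.2⟩
      left_inv := fun w => rfl
      right_inv := fun w => rfl }
  have e2 : Set.Iic (⟨z, hz⟩ : Set.Iic x) ≃ Set.Iic (e ⟨z, hz⟩) :=
    Equiv.subtypeEquiv e.toEquiv (fun w => by
      simp only [Set.mem_Iic]
      exact ⟨fun h => e.monotone h, fun h => by
        have := e.symm.monotone h
        simpa using this⟩)
  have h2 : Nat.card (Set.Iic z) = 3 ^ Cube.nnone (e ⟨z, hz⟩) := by
    rw [Nat.card_congr (e1.trans e2), Cube.card_Iic]
  exact Nat.pow_right_injective (by norm_num) (h1.symm.trans h2)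

lemma iso_top {x : K} (e : Set.Iic x ≃o (Fin (rank x) → IntervalFace)) :
    e ⟨x, le_refl x⟩ = ⊤ := by
  have hall : ∀ w : Set.Iic x, w ≤ ⟨x, le_refl x⟩ := fun w => w.2
  refine le_antisymm le_top ?_
  have h := e.monotone (hall (e.symm ⊤))
  rwa [e.apply_symm_apply] at h

lemma rank_lt_of_lt (hcubical : ∀ x : K, Nonempty (Set.Iic x ≃o (Fin (rank x) → IntervalFace)))
    {z x : K} (h : z < x) : rank z < rank x := by
  obtain ⟨e⟩ := hcubical x
  rw [rank_eq_nnone hcubical h.le e]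
  refine Cube.nnone_lt ?_
  intro hc
  rw [← iso_top e] at hc
  have := e.injective hc
  exact h.ne (congrArg Subtype.val this)

lemma even_below (hcubical : ∀ x : K, Nonempty (Set.Iic x ≃o (Fin (rank x) → IntervalFace)))
    (x : K) (p : ℕ → Prop) : Even (Nat.card {z : K // z < x ∧ p (rank z)}) := by
  obtain ⟨e⟩ := hcubical x
  have hnetop : ∀ (z : K) (hzx : z < x), e ⟨z, hzx.le⟩ ≠ ⊤ := by
    intro z hzx hc
    rw [← iso_top e] at hc
    exact hzx.ne (congrArg Subtype.val (e.injective hc))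
  have equiv1 : {z : K // z < x ∧ p (rank z)} ≃
      {Y : Fin (rank x) → IntervalFace // Y ≠ ⊤ ∧ p (Cube.nnone Y)} :=
    { toFun := fun z => ⟨e ⟨z.1, z.2.1.le⟩, hnetop z.1 z.2.1, by
        rw [← rank_eq_nnone hcubical z.2.1.le e]; exact z.2.2⟩
      invFun := fun Y => ⟨(e.symm Y.1).1, by
        constructor
        · refine lt_of_le_of_ne (e.symm Y.1).2 ?_
          intro hc
          apply Y.2.1
          have : (e.symm Y.1) = ⟨x, le_refl x⟩ := Subtype.ext hc
          rw [← e.apply_symm_apply Y.1, this, iso_top e]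
        · have hr := rank_eq_nnone hcubical (e.symm Y.1).2 e
          rw [show (⟨(e.symm Y.1).1, (e.symm Y.1).2⟩ : Set.Iic x) = e.symm Y.1 from rfl,
            e.apply_symm_apply] at hr
          rw [hr]; exact Y.2.2⟩
      left_inv := fun z => by
        apply Subtype.ext
        show (e.symm (e ⟨z.1, _⟩)).1 = z.1
        rw [e.symm_apply_apply]
      right_inv := fun Y => by
        apply Subtype.ext
        show e ⟨(e.symm Y.1).1, _⟩ = Y.1
        rw [show (⟨(e.symm Y.1).1, (e.symm Y.1).2⟩ : Set.Iic x) = e.symm Y.1 from rfl,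
          e.apply_symm_apply] }
  rw [Nat.card_congr equiv1]
  exact Cube.even_card_sub_top p

lemma even_between (hcubical : ∀ x : K, Nonempty (Set.Iic x ≃o (Fin (rank x) → IntervalFace)))
    {y x : K} (hyx : y < x) : Even (Nat.card {z : K // y < z ∧ z < x}) := by
  obtain ⟨e⟩ := hcubical x
  set Y0 : Fin (rank x) → IntervalFace := e ⟨y, hyx.le⟩ with hY0
  have hnetop : ∀ (z : K) (hzx : z < x), e ⟨z, hzx.le⟩ ≠ ⊤ := by
    intro z hzx hc
    rw [← iso_top e] at hc
    exact hzx.ne (congrArg Subtype.val (e.injective hc))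
  have equiv1 : {z : K // y < z ∧ z < x} ≃
      {Y : Fin (rank x) → IntervalFace // Y0 < Y ∧ Y ≠ ⊤} :=
    { toFun := fun z => ⟨e ⟨z.1, z.2.2.le⟩, by
        rw [hY0]
        exact e.strictMono (show (⟨y, hyx.le⟩ : Set.Iic x) < ⟨z.1, z.2.2.le⟩ from z.2.1),
        hnetop z.1 z.2.2⟩
      invFun := fun Y => ⟨(e.symm Y.1).1, by
        constructor
        · have hy0 : e.symm Y0 = ⟨y, hyx.le⟩ := by rw [hY0]; exact e.symm_apply_apply _
          have h := e.symm.strictMono Y.2.1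
          rw [hy0] at h
          exact Subtype.coe_lt_coe.mpr h
        · refine lt_of_le_of_ne (e.symm Y.1).2 ?_
          intro hc
          apply Y.2.2
          have : (e.symm Y.1) = ⟨x, le_refl x⟩ := Subtype.ext hc
          rw [← e.apply_symm_apply Y.1, this, iso_top e]⟩
      left_inv := fun z => by
        apply Subtype.ext
        show (e.symm (e ⟨z.1, _⟩)).1 = z.1
        rw [e.symm_apply_apply]
      right_inv := fun Y => by
        apply Subtype.ext
        show e ⟨(e.symm Y.1).1, _⟩ = Y.1
        rw [show (⟨(e.symm Y.1).1, (e.symm Y.1).2⟩ : Set.Iic x) = e.symm Y.1 from rfl,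
          e.apply_symm_apply] }
  rw [Nat.card_congr equiv1]
  exact Cube.even_card_interval Y0

end KLemmas

/-! ### Flag machinery -/

lemma strictMono_insertNth_iff {α : Type*} [Preorder α] {n : ℕ} (m : Fin (n + 1)) (z : α)
    {p : Fin n → α} (hp : StrictMono p) :
    StrictMono (m.insertNth z p) ↔
      (∀ l, l.castSucc < m → p l < z) ∧ (∀ l, m ≤ l.castSucc → z < p l) := by
  constructor
  · intro h
    constructor
    · intro l hl
      have h2 := h (show m.succAbove l < m from (Fin.succAbove_lt_iff_castSucc_lt m l).mpr hl)
      rwa [Fin.insertNth_apply_succAbove, Fin.insertNth_apply_same] at h2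
    · intro l hl
      have h2 := h (show m < m.succAbove l from (Fin.lt_succAbove_iff_le_castSucc m l).mpr hl)
      rwa [Fin.insertNth_apply_succAbove, Fin.insertNth_apply_same] at h2
  · rintro ⟨h1, h2⟩ j j' hjj
    rcases eq_or_ne m j with rfl | hj
    · rcases eq_or_ne m j' with rfl | hj'
      · exact absurd hjj (lt_irrefl _)
      · obtain ⟨l, rfl⟩ := Fin.exists_succAbove_eq hj'.symm
        rw [Fin.insertNth_apply_same, Fin.insertNth_apply_succAbove]
        exact h2 l ((Fin.lt_succAbove_iff_le_castSucc m l).mp hjj)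
    · obtain ⟨l, rfl⟩ := Fin.exists_succAbove_eq hj.symm
      rcases eq_or_ne m j' with rfl | hj'
      · rw [Fin.insertNth_apply_same, Fin.insertNth_apply_succAbove]
        exact h1 l ((Fin.succAbove_lt_iff_castSucc_lt m l).mp hjj)
      · obtain ⟨l', rfl⟩ := Fin.exists_succAbove_eq hj'.symm
        rw [Fin.insertNth_apply_succAbove, Fin.insertNth_apply_succAbove]
        exact hp (Fin.succAbove_lt_succAbove_iff.mp hjj)

lemma nat_card_sigma {ι : Type*} [Fintype ι] (T : ι → Type*) [∀ i, Finite (T i)] :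
    Nat.card (Σ i, T i) = ∑ i, Nat.card (T i) := by
  classical
  letI : ∀ i, Fintype (T i) := fun i => Fintype.ofFinite (T i)
  simp only [Nat.card_eq_fintype_card]
  exact Fintype.card_sigma

lemma even_finset_sum {ι : Type*} (s : Finset ι) (f : ι → ℕ) (h : ∀ x ∈ s, Even (f x)) :
    Even (∑ x ∈ s, f x) :=
  Finset.sum_induction f Even (fun _ _ ha hb => ha.add hb) Even.zero h


/-- Let `K` be a finite cubical poset of dimension `d` in which the link of every
face has even Euler characteristic (equivalently, every face lies strictly below
an even number of faces).  Then for `0 < i+1 < d` the `ℤ/2`-chain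
`P_{i+1} = (S(K) + S(K)_{[d,d−i−1]}) ∩ C_{i+1}(K)` (sum of all `(i+1)`-flags not
contained in ranks `{d−i−1,…,d}`) is a cycle: each `i`-flag arises an even number
of times by deleting one entry of a flag of `P_{i+1}`. -/
theorem rank_selected_flag_chain_is_cycle {K : Type*} [PartialOrder K] [Fintype K]
    (rank : K → ℕ) (d : ℕ)
    (hcubical : ∀ x : K, Nonempty (Set.Iic x ≃o (Fin (rank x) → IntervalFace)))
    (hdim : ∀ x : K, rank x ≤ d)
    (hlink : ∀ x : K, Even (Nat.card {z : K // x < z}))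
    (i : ℕ) (hi : i + 1 < d) :
    ∀ b : PosetFlag K i,
      Even (Nat.card
        {q : {a : PosetFlag K (i + 1) //
                ¬ ∀ m : Fin (i + 2), d - (i + 1) ≤ rank (a.val m)} × Fin (i + 2) //
          (fun l : Fin (i + 1) => q.1.val.val (q.2.succAbove l)) = b.val}) := by
  intro b
  set T := d - (i + 1) with hT
  set bb : Fin (i + 1) → K := b.val with hbb
  have hb : StrictMono bb := b.2
  -- the insertion condition
  set Cond : Fin (i + 2) → K → Prop := fun m z =>
    StrictMono (m.insertNth z bb) ∧
      ¬ ∀ m' : Fin (i + 2), T ≤ rank (Fin.insertNth (α := fun _ => K) m z bb m') with hCond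
  -- the sigma decomposition
  have e1 : {q : {a : PosetFlag K (i + 1) //
                ¬ ∀ m : Fin (i + 2), T ≤ rank (a.val m)} × Fin (i + 2) //
          (fun l : Fin (i + 1) => q.1.val.val (q.2.succAbove l)) = bb} ≃
      Σ m : Fin (i + 2), {z : K // Cond m z} :=
    { toFun := fun ⟨⟨⟨⟨aval, hsm⟩, htop⟩, m⟩, hq⟩ => ⟨m, aval m, by
        have key : m.insertNth (aval m) bb = aval := by
          rw [← hq]
          exact Fin.insertNth_self_removeNth m aval
        show StrictMono (m.insertNth (aval m) bb) ∧
          ¬ ∀ m' : Fin (i + 2), T ≤ rank (Fin.insertNth (α := fun _ => K) m (aval m) bb m')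
        rw [key]
        exact ⟨hsm, htop⟩⟩
      invFun := fun s =>
        ⟨(⟨⟨s.1.insertNth s.2.1 bb, s.2.2.1⟩, s.2.2.2⟩, s.1), by
          funext l
          exact Fin.insertNth_apply_succAbove (α := fun _ => K) s.1 s.2.1 bb l⟩
      left_inv := fun ⟨⟨⟨⟨aval, hsm⟩, htop⟩, m⟩, hq⟩ => by
        have key : m.insertNth (aval m) bb = aval := by
          rw [← hq]
          exact Fin.insertNth_self_removeNth m aval
        apply Subtype.ext
        apply Prod.ext
        · apply Subtype.ext
          apply Subtype.ext
          exact key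
        · rfl
      right_inv := fun s => by
        apply congrArg (Sigma.mk s.1)
        apply Subtype.ext
        exact Fin.insertNth_apply_same (α := fun _ => K) s.1 s.2.1 bb }
  rw [Nat.card_congr e1, nat_card_sigma]
  apply even_finset_sum
  intro m _
  -- case analysis
  by_cases hB : ∀ j, T ≤ rank (bb j)
  · -- all entries of b are in the top ranks
    by_cases hm0 : m = 0
    · subst hm0
      have hiff : ∀ z : K, Cond 0 z ↔ (z < bb 0 ∧ rank z < T) := by
        intro z
        rw [hCond]
        simp only
        constructor
        · rintro ⟨hsm, htop⟩
          have hbound := (strictMono_insertNth_iff 0 z hb).mp hsm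
          refine ⟨hbound.2 0 (by simp), ?_⟩
          rw [not_forall] at htop
          obtain ⟨m', hm'⟩ := htop
          rw [not_le] at hm'
          rcases eq_or_ne m' 0 with rfl | hm'0
          · rwa [Fin.insertNth_apply_same] at hm'
          · obtain ⟨l, rfl⟩ := Fin.exists_succAbove_eq hm'0
            rw [Fin.insertNth_apply_succAbove] at hm'
            exact absurd (hB l) (not_le.mpr hm')
        · rintro ⟨hz, hr⟩
          constructor
          · refine (strictMono_insertNth_iff 0 z hb).mpr ⟨?_, ?_⟩
            · intro l hl
              exact absurd hl (Fin.not_lt_zero _)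
            · intro l _
              exact lt_of_lt_of_le hz (hb.monotone (Fin.zero_le l))
          · intro hall
            have := hall 0
            rw [Fin.insertNth_apply_same] at this
            exact absurd this (not_le.mpr hr)
      rw [Nat.card_congr (Equiv.subtypeEquivRight hiff)]
      exact even_below hcubical (bb 0) (fun r => r < T)
    · -- insertion not at the bottom is impossible in the all-top case
      haveI : IsEmpty {z : K // Cond m z} := by
        refine ⟨?_⟩
        rintro ⟨z, hsm, htop⟩
        obtain ⟨l0, hl0⟩ := Fin.exists_succAbove_eq (Ne.symm hm0)
        have h0m : (0 : Fin (i + 2)) < m := Fin.pos_of_ne_zero hm0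
        have hlt : bb l0 < z := by
          have := hsm (show m.succAbove l0 < m from hl0.symm ▸ h0m)
          rwa [Fin.insertNth_apply_succAbove, Fin.insertNth_apply_same] at this
        apply htop
        intro m'
        rcases eq_or_ne m' m with rfl | hm'
        · rw [Fin.insertNth_apply_same]
          exact le_trans (hB l0) (rank_lt_of_lt hcubical hlt).le
        · obtain ⟨l, rfl⟩ := Fin.exists_succAbove_eq hm'
          rw [Fin.insertNth_apply_succAbove]
          exact hB l
      rw [Nat.card_of_isEmpty]
      exact Even.zero
  · -- some entry of b lies strictly below the top ranks
    rw [not_forall] at hB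
    obtain ⟨j0, hj0⟩ := hB
    rw [not_le] at hj0
    have htop : ∀ z : K,
        ¬ ∀ m' : Fin (i + 2), T ≤ rank (Fin.insertNth (α := fun _ => K) m z bb m') := by
      intro z hall
      have := hall (m.succAbove j0)
      rw [Fin.insertNth_apply_succAbove] at this
      exact absurd this (not_le.mpr hj0)
    have hiff0 : ∀ z : K, Cond m z ↔ StrictMono (m.insertNth z bb) := by
      intro z
      rw [hCond]
      exact ⟨fun h => h.1, fun h => ⟨h, htop z⟩⟩
    rcases Fin.eq_zero_or_eq_succ m with rfl | ⟨k, rfl⟩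
    · -- bottom insertion
      have hiff : ∀ z : K, Cond 0 z ↔ (z < bb 0 ∧ True) := by
        intro z
        rw [hiff0 z, strictMono_insertNth_iff 0 z hb]
        constructor
        · rintro ⟨_, h2⟩
          exact ⟨h2 0 (by simp), trivial⟩
        · rintro ⟨hz, _⟩
          refine ⟨fun l hl => absurd hl (Fin.not_lt_zero _), fun l _ =>
            lt_of_lt_of_le hz (hb.monotone (Fin.zero_le l))⟩
      rw [Nat.card_congr (Equiv.subtypeEquivRight hiff)]
      exact even_below hcubical (bb 0) (fun _ => True)
    · by_cases hk : k = Fin.last i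
      · -- top insertion
        subst hk
        have hiff : ∀ z : K, Cond (Fin.last i).succ z ↔ bb (Fin.last i) < z := by
          intro z
          rw [hiff0 z, strictMono_insertNth_iff _ z hb]
          constructor
          · rintro ⟨h1, _⟩
            exact h1 (Fin.last i) (Fin.castSucc_lt_succ_iff.mpr le_rfl)
          · intro hz
            refine ⟨fun l hl => lt_of_le_of_lt (hb.monotone ?_) hz, fun l hl => ?_⟩
            · exact Fin.le_last l
            · exfalso
              have := lt_of_le_of_lt hl (Fin.castSucc_lt_last l)
              have h2 : (Fin.last i).succ = Fin.last (i + 1) := by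
                ext
                simp
              rw [h2] at this
              exact absurd this (lt_irrefl _)
        rw [Nat.card_congr (Equiv.subtypeEquivRight hiff)]
        exact hlink (bb (Fin.last i))
      · -- middle insertion
        have hki : k.1 < i := by
          rcases lt_or_eq_of_le (Nat.lt_succ_iff.mp k.2) with h | h
          · exact h
          · exact absurd (Fin.ext h) hk
        set k' : Fin (i + 1) := ⟨k.1 + 1, Nat.succ_lt_succ hki⟩ with hk'
        have hkk' : bb k < bb k' := hb (by rw [Fin.lt_def]; simp [hk'])
        have hiff : ∀ z : K, Cond k.succ z ↔ (bb k < z ∧ z < bb k') := by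
          intro z
          rw [hiff0 z, strictMono_insertNth_iff _ z hb]
          constructor
          · rintro ⟨h1, h2⟩
            refine ⟨h1 k (Fin.castSucc_lt_succ_iff.mpr le_rfl), h2 k' ?_⟩
            rw [Fin.le_def]
            simp [hk']
          · rintro ⟨hz1, hz2⟩
            constructor
            · intro l hl
              exact lt_of_le_of_lt (hb.monotone (Fin.castSucc_lt_succ_iff.mp hl)) hz1
            · intro l hl
              refine lt_of_lt_of_le hz2 (hb.monotone ?_)
              rw [Fin.le_def] at hl ⊢
              simp only [Fin.val_succ, Fin.coe_castSucc] at hl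
              simpa [hk'] using hl
        rw [Nat.card_congr (Equiv.subtypeEquivRight hiff)]
        exact even_between hcubical hkk'
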